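/- Let (x_t)_{t≥1} be vectors in R^d with ‖x_t‖ ≤ L for all t, and for λ > 0 define V_t = λI + Σ_{k=1}^{t−1} x_k x_kᵀ. Then Σ_{t=1}^T min{1, ‖x_t‖²_{V_t⁻¹}} ≤ 2d log(1 + TL²/(dλ)). -/

import Mathlib

open Matrix Finset

/-- The design matrix `V_t = λ I + ∑_{k < t} x_k x_kᵀ`. -/
noncomputable def designMatrix {d : ℕ} (lam : ℝ) (x : ℕ → Fin d → ℝ) (t : ℕ) :
    Matrix (Fin d) (Fin d) ℝ :=
  lam • (1 : Matrix (Fin d) (Fin d) ℝ) + ∑ k ∈ Finset.range t, vecMulVec (x k) (x k)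

lemma EP.vecMulVec_psd {d : ℕ} (v : Fin d → ℝ) : (vecMulVec v v).PosSemidef := by
  rw [Matrix.vecMulVec_eq (Fin 1)]
  have h : Matrix.replicateRow (Fin 1) v = (Matrix.replicateCol (Fin 1) v)ᴴ := by
    rw [Matrix.conjTranspose_replicateCol]; simp
  rw [h]
  exact Matrix.posSemidef_self_mul_conjTranspose _

lemma EP.succ_eq {d : ℕ} (lam : ℝ) (x : ℕ → Fin d → ℝ) (t : ℕ) :
    designMatrix lam x (t + 1) = designMatrix lam x t + vecMulVec (x t) (x t) := by
  unfold designMatrix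
  rw [Finset.sum_range_succ, add_assoc]

lemma EP.posDef {d : ℕ} {lam : ℝ} (hlam : 0 < lam) (x : ℕ → Fin d → ℝ) (t : ℕ) :
    (designMatrix lam x t).PosDef := by
  induction t with
  | zero =>
      show (lam • (1 : Matrix (Fin d) (Fin d) ℝ) + ∑ k ∈ Finset.range 0, _).PosDef
      rw [Finset.sum_range_zero, add_zero, Matrix.smul_one_eq_diagonal]
      exact Matrix.posDef_diagonal_iff.mpr fun i => hlam
  | succ t ih =>
      rw [EP.succ_eq]
      exact ih.add_posSemidef (EP.vecMulVec_psd _)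

lemma EP.det_succ {d : ℕ} {lam : ℝ} (hlam : 0 < lam) (x : ℕ → Fin d → ℝ) (t : ℕ) :
    (designMatrix lam x (t + 1)).det
      = (designMatrix lam x t).det
        * (1 + x t ⬝ᵥ (designMatrix lam x t)⁻¹.mulVec (x t)) := by
  have hV := EP.posDef hlam x t
  have hdet : IsUnit (designMatrix lam x t).det := (isUnit_iff_ne_zero).mpr hV.det_pos.ne'
  have hinv : ∀ i j, (designMatrix lam x t)⁻¹ i j = (designMatrix lam x t)⁻¹ j i := by
    intro i j
    conv_lhs => rw [← hV.inv.isHermitian.eq]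
    rfl
  rw [EP.succ_eq, Matrix.vecMulVec_eq (Fin 1), Matrix.det_add_replicateCol_mul_replicateRow hdet]
  simp only [Matrix.det_unique]
  congr 1
  simp only [Matrix.add_apply, Matrix.one_apply_eq, Matrix.mul_apply, dotProduct,
    Matrix.mulVec, Matrix.replicateRow_apply, Matrix.replicateCol_apply, dotProduct,
    Finset.mul_sum, Finset.sum_mul]
  congr 1
  apply Finset.sum_congr rfl
  intro j _
  apply Finset.sum_congr rfl
  intro i _
  rw [hinv i j]
  ring

-- trace = sum of eigenvalues for real symmetric
lemma EP.trace_eq {d : ℕ} {A : Matrix (Fin d) (Fin d) ℝ} (hA : A.IsHermitian) :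
    A.trace = ∑ i, hA.eigenvalues i := by
  conv_lhs => rw [hA.spectral_theorem]
  rw [Unitary.conjStarAlgAut_apply, Matrix.trace_mul_comm, ← Matrix.mul_assoc,
    Unitary.coe_star_mul_self, Matrix.one_mul, Matrix.trace_diagonal]
  simp

-- det ≤ (trace/d)^d for posdef real
lemma EP.det_le {d : ℕ} (hd : 0 < d) {A : Matrix (Fin d) (Fin d) ℝ} (hA : A.PosDef) :
    A.det ≤ (A.trace / d) ^ d := by
  have hev := hA.eigenvalues_pos
  rw [hA.isHermitian.det_eq_prod_eigenvalues, EP.trace_eq hA.isHermitian]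
  have hd' : (0:ℝ) < d := Nat.cast_pos.mpr hd
  have hAM := Real.geom_mean_le_arith_mean_weighted Finset.univ
      (fun _ => (d:ℝ)⁻¹) hA.isHermitian.eigenvalues
      (fun i _ => by positivity) (by simp [Finset.card_univ]; field_simp)
      (fun i _ => (hev i).le)
  have h1 : (∏ i, hA.isHermitian.eigenvalues i ^ ((d:ℝ)⁻¹)) ^ d
      = ∏ i, hA.isHermitian.eigenvalues i := by
    rw [← Finset.prod_pow]
    refine Finset.prod_congr rfl fun i _ => ?_
    rw [← Real.rpow_natCast (_ ^ _) d, ← Real.rpow_mul (hev i).le,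
      inv_mul_cancel₀ hd'.ne', Real.rpow_one]
  calc ∏ i, hA.isHermitian.eigenvalues i
      = (∏ i, hA.isHermitian.eigenvalues i ^ ((d:ℝ)⁻¹)) ^ d := h1.symm
    _ ≤ (∑ i, (d:ℝ)⁻¹ * hA.isHermitian.eigenvalues i) ^ d := by
        apply pow_le_pow_left₀ _ hAM
        exact Finset.prod_nonneg fun i _ => Real.rpow_nonneg (hev i).le _
    _ = ((∑ i, hA.isHermitian.eigenvalues i) / d) ^ d := by
        rw [← Finset.mul_sum]; ring_nf

lemma EP.min_le {u : ℝ} (hu : 0 ≤ u) : min 1 u ≤ 2 * Real.log (1 + u) := by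
  rcases le_total u 1 with h | h
  · rw [min_eq_right h]
    have h1 : (1:ℝ) - u/2 ≤ Real.exp (-(u/2)) := by
      have := Real.add_one_le_exp (-(u/2)); linarith
    have h2 : Real.exp (u/2) * (1 - u/2) ≤ 1 := by
      calc Real.exp (u/2) * (1 - u/2) ≤ Real.exp (u/2) * Real.exp (-(u/2)) :=
            mul_le_mul_of_nonneg_left h1 (Real.exp_pos _).le
        _ = 1 := by rw [← Real.exp_add]; simp
    have h3 : Real.exp (u/2) ≤ 1 + u := by nlinarith [Real.exp_pos (u/2)]
    have h4 : u/2 ≤ Real.log (1 + u) :=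
      (Real.le_log_iff_exp_le (by linarith)).mpr h3
    linarith
  · rw [min_eq_left h]
    have h1 : Real.log 2 ≤ Real.log (1 + u) :=
      Real.log_le_log (by norm_num) (by linarith)
    have := Real.log_two_gt_d9
    linarith

lemma EP.trace_design {d : ℕ} (lam : ℝ) (x : ℕ → Fin d → ℝ) (T : ℕ) :
    (designMatrix lam x T).trace = d * lam + ∑ t ∈ Finset.range T, (x t ⬝ᵥ x t) := by
  unfold designMatrix
  rw [Matrix.trace_add, Matrix.trace_smul, Matrix.trace_one, Matrix.trace_sum]
  simp only [smul_eq_mul, Fintype.card_fin]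
  rw [mul_comm]
  congr 1

/-- **Elliptical potential lemma** (Lemma 19.4 of Lattimore & Szepesvári).
If `‖x_t‖ ≤ L` and `V_t = λI + ∑_{k<t} x_k x_kᵀ` with `λ > 0`, then
`∑_{t<T} min{1, ‖x_t‖²_{V_t⁻¹}} ≤ 2 d log(1 + T L² / (d λ))`. -/
theorem elliptical_potential
    {d : ℕ} (hd : 0 < d) {lam L : ℝ} (hlam : 0 < lam) (hL : 0 < L)
    (x : ℕ → Fin d → ℝ) (hx : ∀ t, Real.sqrt (x t ⬝ᵥ x t) ≤ L) (T : ℕ) :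
    ∑ t ∈ Finset.range T,
        min 1 (x t ⬝ᵥ (designMatrix lam x t)⁻¹.mulVec (x t))
      ≤ 2 * d * Real.log (1 + T * L ^ 2 / (d * lam)) := by
  have hd' : (0:ℝ) < d := Nat.cast_pos.mpr hd
  set B : ℝ := 1 + T * L ^ 2 / (d * lam) with hB
  have hB1 : (1:ℝ) ≤ B := by
    have h : (0:ℝ) ≤ T * L ^ 2 / (d * lam) := by positivity
    rw [hB]
    linarith
  have hB0 : (0:ℝ) < B := lt_of_lt_of_le one_pos hB1
  set u : ℕ → ℝ := fun t => x t ⬝ᵥ (designMatrix lam x t)⁻¹.mulVec (x t) with husdef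
  have hu0 : ∀ t, 0 ≤ u t := fun t => by
    have := ((EP.posDef hlam x t).inv.posSemidef).dotProduct_mulVec_nonneg (x t)
    simpa using this
  set f : ℕ → ℝ := fun t => Real.log (designMatrix lam x t).det with hf
  have hlog : ∀ t, Real.log (1 + u t) = f (t+1) - f t := by
    intro t
    have hdet := EP.det_succ hlam x t
    have hd1 : (designMatrix lam x t).det ≠ 0 := (EP.posDef hlam x t).det_pos.ne'
    have hd2 : 1 + u t ≠ 0 := by have := hu0 t; positivity
    simp only [hf]
    rw [hdet, Real.log_mul hd1 hd2]
    ring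
  -- step 1: sum of mins ≤ 2 * (f T - f 0)
  have step1 : ∑ t ∈ Finset.range T, min 1 (u t) ≤ 2 * (f T - f 0) := by
    calc ∑ t ∈ Finset.range T, min 1 (u t)
        ≤ ∑ t ∈ Finset.range T, 2 * Real.log (1 + u t) :=
          Finset.sum_le_sum fun t _ => EP.min_le (hu0 t)
      _ = 2 * ∑ t ∈ Finset.range T, (f (t+1) - f t) := by
          rw [Finset.mul_sum]; exact Finset.sum_congr rfl fun t _ => by rw [hlog t]
      _ = 2 * (f T - f 0) := by rw [Finset.sum_range_sub]
  -- f 0 = d * log lam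
  have hf0 : f 0 = d * Real.log lam := by
    simp only [hf]
    unfold designMatrix
    rw [Finset.sum_range_zero, add_zero, Matrix.det_smul, Matrix.det_one, mul_one,
      Real.log_pow, Fintype.card_fin]
  -- f T ≤ d * log (lam * B)
  have hfT : f T ≤ d * Real.log (lam * B) := by
    have htr : (designMatrix lam x T).trace / d ≤ lam * B := by
      rw [EP.trace_design]
      have hsum : ∑ t ∈ Finset.range T, (x t ⬝ᵥ x t) ≤ T * L ^ 2 := by
        calc ∑ t ∈ Finset.range T, (x t ⬝ᵥ x t)
            ≤ ∑ t ∈ Finset.range T, L ^ 2 := by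
              refine Finset.sum_le_sum fun t _ => ?_
              have h0 : 0 ≤ x t ⬝ᵥ x t :=
                Finset.sum_nonneg fun i _ => mul_self_nonneg _
              calc x t ⬝ᵥ x t = Real.sqrt (x t ⬝ᵥ x t) ^ 2 := (Real.sq_sqrt h0).symm
                _ ≤ L ^ 2 := pow_le_pow_left₀ (Real.sqrt_nonneg _) (hx t) 2
          _ = T * L ^ 2 := by rw [Finset.sum_const, Finset.card_range]; ring
      rw [div_le_iff₀ hd']
      have : lam * B * d = d * lam + T * L ^ 2 := by
        rw [hB]; field_simp
      rw [this]
      linarith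
    have hdetle : (designMatrix lam x T).det ≤ (lam * B) ^ d := by
      calc (designMatrix lam x T).det
          ≤ ((designMatrix lam x T).trace / d) ^ d := EP.det_le hd (EP.posDef hlam x T)
        _ ≤ (lam * B) ^ d := by
            have hs : 0 ≤ ∑ t ∈ Finset.range T, (x t ⬝ᵥ x t) :=
              Finset.sum_nonneg fun t _ => Finset.sum_nonneg fun i _ => mul_self_nonneg _
            have h0 : 0 ≤ (designMatrix lam x T).trace / d := by
              rw [EP.trace_design]
              have hdl : (0:ℝ) ≤ d * lam := by positivity
              exact div_nonneg (by linarith) hd'.le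
            exact pow_le_pow_left₀ h0 htr d
    calc f T ≤ Real.log ((lam * B) ^ d) :=
          Real.log_le_log (EP.posDef hlam x T).det_pos hdetle
      _ = d * Real.log (lam * B) := by rw [Real.log_pow]
  have hlogB : Real.log (lam * B) - Real.log lam = Real.log B := by
    rw [Real.log_mul hlam.ne' hB0.ne']; ring
  calc ∑ t ∈ Finset.range T, min 1 (u t) ≤ 2 * (f T - f 0) := step1
    _ ≤ 2 * (d * Real.log (lam * B) - d * Real.log lam) := by
        rw [hf0]; linarith
    _ = 2 * d * Real.log B := by rw [← hlogB]; ring
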